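/- Let φ : (0,∞) → [0,∞) be integrable and monotone decreasing. Then for every x > 0, 0 ≤ ∫₀^∞ sin(ux) φ(u) du ≤ ∫₀^{π/x} φ(u) du. -/

import Mathlib

open MeasureTheory Real Set

theorem smalltime_EqEsyEst1 (φ : ℝ → ℝ)
    (hpos : ∀ u ∈ Ioi (0:ℝ), 0 ≤ φ u)
    (hint : IntegrableOn φ (Ioi 0))
    (hanti : AntitoneOn φ (Ioi 0))
    (x : ℝ) (hx : 0 < x) :
    0 ≤ ∫ u in Ioi (0:ℝ), Real.sin (u * x) * φ u ∧
    ∫ u in Ioi (0:ℝ), Real.sin (u * x) * φ u ≤ ∫ u in Ioc (0:ℝ) (π / x), φ u := by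
  set T := π / x with hTdef
  have hT0 : 0 < T := div_pos pi_pos hx
  have hTx : T * x = π := div_mul_cancel₀ π hx.ne'
  set f : ℝ → ℝ := fun u => Real.sin (u * x) * φ u with hfdef
  -- the cover of (0,∞) by consecutive intervals
  have hcover : Ioi (0:ℝ) = ⋃ k : ℕ, Ioc ((k:ℝ)*T) (((k:ℝ)+1)*T) := by
    ext u
    simp only [mem_Ioi, mem_iUnion, mem_Ioc]
    constructor
    · intro hu
      have hu' : 0 < u / T := div_pos hu hT0
      obtain ⟨n, hn⟩ : ∃ n : ℕ, ⌈u/T⌉₊ = n + 1 :=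
        ⟨⌈u/T⌉₊ - 1, (Nat.succ_pred_eq_of_pos (Nat.ceil_pos.mpr hu')).symm⟩
      refine ⟨n, ?_, ?_⟩
      · have h1 : ((⌈u/T⌉₊ : ℝ)) < u/T + 1 := Nat.ceil_lt_add_one hu'.le
        rw [hn] at h1
        push_cast at h1
        have h2 : (n : ℝ) < u / T := by linarith
        calc (n:ℝ) * T < (u/T) * T := mul_lt_mul_of_pos_right h2 hT0
        _ = u := div_mul_cancel₀ u hT0.ne'
      · have h2 : u/T ≤ (⌈u/T⌉₊ : ℝ) := Nat.le_ceil _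
        rw [hn] at h2; push_cast at h2
        calc u = (u/T)*T := (div_mul_cancel₀ u hT0.ne').symm
        _ ≤ ((n:ℝ)+1)*T := mul_le_mul_of_nonneg_right h2 hT0.le
    · rintro ⟨k, hk1, hk2⟩
      have : (0:ℝ) ≤ (k:ℝ)*T := mul_nonneg (Nat.cast_nonneg k) hT0.le
      linarith
  have hdisj : Pairwise (Function.onFun Disjoint fun k : ℕ => Ioc ((k:ℝ)*T) (((k:ℝ)+1)*T)) := by
    have key : ∀ i j : ℕ, i < j →
        Disjoint (Ioc ((i:ℝ)*T) (((i:ℝ)+1)*T)) (Ioc ((j:ℝ)*T) (((j:ℝ)+1)*T)) := by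
      intro i j hij
      rw [Set.disjoint_left]
      rintro u ⟨_, hu2⟩ ⟨hu3, _⟩
      have hij' : (i:ℝ)+1 ≤ (j:ℝ) := by exact_mod_cast hij
      have : ((i:ℝ)+1)*T ≤ (j:ℝ)*T := mul_le_mul_of_nonneg_right hij' hT0.le
      linarith
    intro i j hij
    rcases hij.lt_or_gt with h | h
    · exact key i j h
    · exact (key j i h).symm
  have hsub : ∀ k : ℕ, Ioc ((k:ℝ)*T) (((k:ℝ)+1)*T) ⊆ Ioi 0 := by
    intro k u hu
    have : (0:ℝ) ≤ (k:ℝ)*T := mul_nonneg (Nat.cast_nonneg k) hT0.le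
    exact lt_of_le_of_lt this hu.1
  have hstep : ∀ k : ℕ, ((k:ℝ))*T ≤ ((k:ℝ)+1)*T := by
    intro k
    have : (k:ℝ) ≤ (k:ℝ)+1 := by linarith
    exact mul_le_mul_of_nonneg_right this hT0.le
  -- integrability of f
  have habs : ∃ C, ∀ u : ℝ, ‖Real.sin (u*x)‖ ≤ C :=
    ⟨1, fun u => by rw [Real.norm_eq_abs]; exact Real.abs_sin_le_one (u*x)⟩
  have hsinm : AEStronglyMeasurable (fun u : ℝ => Real.sin (u*x)) :=
    (Real.continuous_sin.comp (continuous_id.mul continuous_const)).aestronglyMeasurable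
  have hfint : IntegrableOn f (Ioi 0) :=
    hint.bdd_mul hsinm.restrict (ae_of_all _ habs.choose_spec)
  -- HasSum decompositions
  have hS : HasSum (fun k : ℕ => ∫ u in Ioc ((k:ℝ)*T) (((k:ℝ)+1)*T), f u)
      (∫ u in Ioi (0:ℝ), f u) := by
    have := hasSum_integral_iUnion (μ := volume) (f := f)
      (fun k : ℕ => measurableSet_Ioc) hdisj (hcover ▸ hfint)
    rwa [← hcover] at this
  have hSφ : HasSum (fun k : ℕ => ∫ u in Ioc ((k:ℝ)*T) (((k:ℝ)+1)*T), φ u)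
      (∫ u in Ioi (0:ℝ), φ u) := by
    have := hasSum_integral_iUnion (μ := volume) (f := φ)
      (fun k : ℕ => measurableSet_Ioc) hdisj (hcover ▸ hint)
    rwa [← hcover] at this
  -- the translated pieces
  set b : ℕ → ℝ := fun k => ∫ u in Ioc (0:ℝ) T, Real.sin (u*x) * φ (u + (k:ℝ)*T) with hbdef
  -- integrability of translates
  have hφk : ∀ k : ℕ, IntegrableOn (fun u => φ (u + (k:ℝ)*T)) (Ioc 0 T) := by
    intro k
    have h1 : IntegrableOn φ (Ioc ((k:ℝ)*T) (((k:ℝ)+1)*T)) := hint.mono_set (hsub k)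
    have h2 : IntervalIntegrable φ volume ((k:ℝ)*T) (((k:ℝ)+1)*T) := by
      rw [intervalIntegrable_iff_integrableOn_Ioc_of_le (hstep k)]; exact h1
    have h3 := h2.comp_add_right ((k:ℝ)*T)
    rw [show (k:ℝ)*T - (k:ℝ)*T = 0 by ring, show ((k:ℝ)+1)*T - (k:ℝ)*T = T by ring] at h3
    rwa [intervalIntegrable_iff_integrableOn_Ioc_of_le hT0.le] at h3
  have hbint : ∀ k : ℕ, IntegrableOn (fun u => Real.sin (u*x) * φ (u + (k:ℝ)*T)) (Ioc 0 T) :=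
    fun k => (hφk k).bdd_mul hsinm.restrict (ae_of_all _ habs.choose_spec)
  -- positivity facts on Ioc 0 T
  have hsinpos : ∀ u ∈ Ioc (0:ℝ) T, 0 ≤ Real.sin (u*x) := by
    intro u hu
    apply Real.sin_nonneg_of_nonneg_of_le_pi (mul_nonneg hu.1.le hx.le)
    calc u*x ≤ T*x := mul_le_mul_of_nonneg_right hu.2 hx.le
    _ = π := hTx
  have hmem : ∀ (k : ℕ), ∀ u ∈ Ioc (0:ℝ) T, u + (k:ℝ)*T ∈ Ioi (0:ℝ) := by
    intro k u hu
    have : (0:ℝ) ≤ (k:ℝ)*T := mul_nonneg (Nat.cast_nonneg k) hT0.le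
    simp only [mem_Ioi]
    linarith [hu.1]
  have hb0 : ∀ k, 0 ≤ b k := by
    intro k
    apply setIntegral_nonneg measurableSet_Ioc
    intro u hu
    exact mul_nonneg (hsinpos u hu) (hpos _ (hmem k u hu))
  -- consecutive monotonicity
  have hbmono : ∀ k : ℕ, b (k+1) ≤ b k := by
    intro k
    have h1 : IntegrableOn (fun u => Real.sin (u*x) * φ (u + ((k:ℕ)+1:ℕ)*T)) (Ioc 0 T) := hbint (k+1)
    apply setIntegral_mono_on (by exact_mod_cast h1) (hbint k) measurableSet_Ioc
    intro u hu
    have hle : u + (k:ℝ)*T ≤ u + ((k:ℝ)+1)*T := by nlinarith [hT0.le]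
    have : φ (u + ((k:ℝ)+1)*T) ≤ φ (u + (k:ℝ)*T) := by
      have hm1 := hmem k u hu
      have hm2 : u + ((k:ℝ)+1)*T ∈ Ioi (0:ℝ) := by
        have := hmem (k+1) u hu; push_cast at this ⊢; exact this
      exact hanti hm1 hm2 hle
    have := mul_le_mul_of_nonneg_left this (hsinpos u hu)
    push_cast
    exact this
  -- the key identity
  have hab : ∀ k : ℕ, ∫ u in Ioc ((k:ℝ)*T) (((k:ℝ)+1)*T), f u = (-1:ℝ)^k * b k := by
    intro k
    rw [← intervalIntegral.integral_of_le (hstep k)]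
    have h2 : (∫ u in ((k:ℝ)*T)..(((k:ℝ)+1)*T), f u) = ∫ u in (0:ℝ)..T, f (u + (k:ℝ)*T) := by
      rw [intervalIntegral.integral_comp_add_right f ((k:ℝ)*T)]
      congr 1 <;> ring
    rw [h2]
    have h3 : ∀ u : ℝ, f (u + (k:ℝ)*T) = (-1:ℝ)^k * (Real.sin (u*x) * φ (u + (k:ℝ)*T)) := by
      intro u
      have hc : (u + (k:ℝ)*T) * x = u*x + ((k:ℤ):ℝ) * π := by
        push_cast; rw [← hTx]; ring
      simp only [hfdef]
      rw [hc, Real.sin_add_int_mul_pi, zpow_natCast]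
      ring
    simp_rw [h3]
    rw [intervalIntegral.integral_const_mul]
    congr 1
    rw [intervalIntegral.integral_of_le hT0.le]
  -- the alternating sum
  have hS' : HasSum (fun k : ℕ => (-1:ℝ)^k * b k) (∫ u in Ioi (0:ℝ), f u) := by
    have := hS
    simp_rw [hab] at this
    exact this
  -- b is dominated by the φ-integrals over the pieces
  have hbc : ∀ k : ℕ, b k ≤ ∫ u in Ioc ((k:ℝ)*T) (((k:ℝ)+1)*T), φ u := by
    intro k
    have h1 : b k ≤ ∫ u in Ioc (0:ℝ) T, φ (u + (k:ℝ)*T) := by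
      apply setIntegral_mono_on (hbint k) (hφk k) measurableSet_Ioc
      intro u hu
      exact mul_le_of_le_one_left (hpos _ (hmem k u hu)) (Real.sin_le_one _)
    have h2 : (∫ u in Ioc (0:ℝ) T, φ (u + (k:ℝ)*T)) = ∫ u in Ioc ((k:ℝ)*T) (((k:ℝ)+1)*T), φ u := by
      rw [← intervalIntegral.integral_of_le hT0.le,
        intervalIntegral.integral_comp_add_right φ ((k:ℝ)*T),
        show (0:ℝ) + (k:ℝ)*T = (k:ℝ)*T by ring, show T + (k:ℝ)*T = ((k:ℝ)+1)*T by ring,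
        intervalIntegral.integral_of_le (hstep k)]
    linarith [h1, h2.le, h2.ge]
  have hbsum : Summable b := Summable.of_nonneg_of_le hb0 hbc hSφ.summable
  have he : Summable (fun k : ℕ => b (2*k)) :=
    hbsum.comp_injective (fun m n h => by omega)
  have ho : Summable (fun k : ℕ => b (2*k+1)) :=
    hbsum.comp_injective (fun m n h => by omega)
  have hgeq : ∀ k : ℕ, ((-1:ℝ))^(2*k) * b (2*k) = b (2*k) := by
    intro k; rw [pow_mul]; norm_num
  have hgoq : ∀ k : ℕ, ((-1:ℝ))^(2*k+1) * b (2*k+1) = -b (2*k+1) := by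
    intro k; rw [pow_succ, pow_mul]; norm_num
  have hkey : (∫ u in Ioi (0:ℝ), f u) = ∑' k, b (2*k) - ∑' k, b (2*k+1) := by
    rw [← hS'.tsum_eq, ← tsum_even_add_odd (f := fun k : ℕ => (-1:ℝ)^k * b k)]
    · rw [tsum_congr hgeq, tsum_congr hgoq, tsum_neg]
      ring
    · exact (summable_congr hgeq).mpr he
    · exact (summable_congr hgoq).mpr ho.neg
  constructor
  · rw [hkey]
    have : ∑' k, b (2*k+1) ≤ ∑' k, b (2*k) :=
      Summable.tsum_le_tsum (fun k => by
        have := hbmono (2*k); exact this) ho he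
    linarith
  · have hT' : (∫ u in Ioc (0:ℝ) (π/x), φ u) = ∫ u in Ioc (0:ℝ) T, φ u := by rw [hTdef]
    rw [hkey, hT']
    have hsplit : ∑' k, b (2*k) = b 0 + ∑' k, b (2*k+2) := by
      rw [Summable.tsum_eq_zero_add he]
      norm_num
      exact tsum_congr fun k => by ring_nf
    have h2 : Summable (fun k : ℕ => b (2*k+2)) :=
      hbsum.comp_injective (fun m n h => by omega)
    have hle : ∑' k, b (2*k+2) ≤ ∑' k, b (2*k+1) :=
      Summable.tsum_le_tsum (fun k => hbmono (2*k+1)) h2 ho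
    have hb0le : b 0 ≤ ∫ u in Ioc (0:ℝ) T, φ u := by
      have hb0eq : b 0 = ∫ u in Ioc (0:ℝ) T, Real.sin (u*x) * φ u := by
        simp [hbdef]
      rw [hb0eq]
      apply setIntegral_mono_on (by simpa using hbint 0)
        (hint.mono_set (fun u hu => hu.1)) measurableSet_Ioc
      intro u hu
      exact mul_le_of_le_one_left (hpos _ hu.1) (Real.sin_le_one _)
    linarith
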